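/- Let ρ(y,λ) = ⟨λ, G^T y − f_*⟩ + (1/(2L))(⟨λ, diag(C)⟩ − ⟨λ, Cλ⟩) with C = G^T G. Let T be an m×m̃ matrix whose columns lie in Δ_m, and define G̃ = GT, f̃_* = T^T f_*, C̃ = T^T C T, and ρ̃(y,λ̃) = ⟨λ̃, G̃^T y − f̃_*⟩ + (1/(2L))(⟨λ̃, diag(C̃)⟩ − ⟨λ̃, C̃λ̃⟩). Then max_{λ̃ ∈ Δ_{m̃}} ρ̃(y,λ̃) ≤ max_{λ ∈ Δ_m} ρ(y,λ) for every y ∈ ℝ^n. -/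

import Mathlib

open Matrix Finset

private lemma jensen_sq (m : ℕ) (w x : Fin m → ℝ) (hw : ∀ i, 0 ≤ w i) (hs : ∑ i, w i = 1) :
    (∑ i, w i * x i) ^ 2 ≤ ∑ i, w i * x i ^ 2 := by
  have h := Finset.sum_mul_sq_le_sq_mul_sq Finset.univ (fun i => Real.sqrt (w i))
    (fun i => Real.sqrt (w i) * x i)
  have e1 : ∀ i, Real.sqrt (w i) * (Real.sqrt (w i) * x i) = w i * x i := by
    intro i; rw [← mul_assoc, Real.mul_self_sqrt (hw i)]
  have e2 : ∀ i, Real.sqrt (w i) ^ 2 = w i := fun i => Real.sq_sqrt (hw i)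
  have e3 : ∀ i, (Real.sqrt (w i) * x i) ^ 2 = w i * x i ^ 2 := by
    intro i; rw [mul_pow, e2]
  simp only [e1, e2, e3, hs, one_mul] at h
  exact h

theorem stmt7 (n m mt : ℕ) (hm : 0 < m) (hmt : 0 < mt)
    (G : Matrix (Fin n) (Fin m) ℝ) (fstar : Fin m → ℝ) (L : ℝ) (hL : 0 < L)
    (T : Matrix (Fin m) (Fin mt) ℝ)
    (hT : ∀ j, (fun i => T i j) ∈ stdSimplex ℝ (Fin m))
    (y : Fin n → ℝ) :
    (⨆ lt : {l : Fin mt → ℝ // l ∈ stdSimplex ℝ (Fin mt)},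
        (lt.1 ⬝ᵥ ((G * T)ᵀ *ᵥ y - Tᵀ *ᵥ fstar)
          + (1/(2*L)) * (lt.1 ⬝ᵥ (Tᵀ * (Gᵀ * G) * T).diag
              - lt.1 ⬝ᵥ ((Tᵀ * (Gᵀ * G) * T) *ᵥ lt.1))))
    ≤ ⨆ l : {l : Fin m → ℝ // l ∈ stdSimplex ℝ (Fin m)},
        (l.1 ⬝ᵥ (Gᵀ *ᵥ y - fstar)
          + (1/(2*L)) * (l.1 ⬝ᵥ (Gᵀ * G).diag - l.1 ⬝ᵥ ((Gᵀ * G) *ᵥ l.1))) := by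
  have hne_mt : Nonempty {l : Fin mt → ℝ // l ∈ stdSimplex ℝ (Fin mt)} := by
    refine ⟨⟨fun i => if i = ⟨0, hmt⟩ then 1 else 0, ?_, ?_⟩⟩
    · intro i; dsimp only; split <;> norm_num
    · simp
  -- continuity and boundedness of the RHS function
  have hcoord : ∀ i, Continuous fun l : {l : Fin m → ℝ // l ∈ stdSimplex ℝ (Fin m)} => l.1 i :=
    fun i => (continuous_apply i).comp continuous_subtype_val
  have hFc : Continuous (fun l : {l : Fin m → ℝ // l ∈ stdSimplex ℝ (Fin m)} =>
      (l.1 ⬝ᵥ (Gᵀ *ᵥ y - fstar)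
          + (1/(2*L)) * (l.1 ⬝ᵥ (Gᵀ * G).diag - l.1 ⬝ᵥ ((Gᵀ * G) *ᵥ l.1)))) := by
    simp only [dotProduct, mulVec]
    exact (continuous_finset_sum _ fun i _ => (hcoord i).mul continuous_const).add
      (continuous_const.mul (Continuous.sub
        (continuous_finset_sum _ fun i _ => (hcoord i).mul continuous_const)
        (continuous_finset_sum _ fun i _ => (hcoord i).mul
          (continuous_finset_sum _ fun j _ => continuous_const.mul (hcoord j)))))
  have hcs : CompactSpace {l : Fin m → ℝ // l ∈ stdSimplex ℝ (Fin m)} :=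
    isCompact_iff_compactSpace.mp (isCompact_stdSimplex ℝ (Fin m))
  have hbdd : BddAbove (Set.range (fun l : {l : Fin m → ℝ // l ∈ stdSimplex ℝ (Fin m)} =>
      (l.1 ⬝ᵥ (Gᵀ *ᵥ y - fstar)
          + (1/(2*L)) * (l.1 ⬝ᵥ (Gᵀ * G).diag - l.1 ⬝ᵥ ((Gᵀ * G) *ᵥ l.1))))) :=
    (isCompact_range hFc).bddAbove
  refine ciSup_le fun lt => ?_
  -- the pushed-forward point
  have hmem : T *ᵥ lt.1 ∈ stdSimplex ℝ (Fin m) := by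
    constructor
    · intro i
      simp only [mulVec, dotProduct]
      exact Finset.sum_nonneg fun j _ => mul_nonneg ((hT j).1 i) (lt.2.1 j)
    · have : ∑ i, (T *ᵥ lt.1) i = ∑ j, (∑ i, T i j) * lt.1 j := by
        simp only [mulVec, dotProduct, Finset.sum_mul]
        exact Finset.sum_comm
      rw [this]
      have h1 : ∀ j, (∑ i, T i j) = 1 := fun j => (hT j).2
      simp only [h1, one_mul]
      exact lt.2.2
  refine le_ciSup_of_le hbdd ⟨T *ᵥ lt.1, hmem⟩ ?_
  -- linear part equality
  have hlin : lt.1 ⬝ᵥ ((G * T)ᵀ *ᵥ y - Tᵀ *ᵥ fstar) = (T *ᵥ lt.1) ⬝ᵥ (Gᵀ *ᵥ y - fstar) := by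
    rw [transpose_mul, ← mulVec_mulVec, ← mulVec_sub, dotProduct_mulVec, vecMul_transpose]
  -- quadratic part equality
  have hquad : lt.1 ⬝ᵥ ((Tᵀ * (Gᵀ * G) * T) *ᵥ lt.1)
      = (T *ᵥ lt.1) ⬝ᵥ ((Gᵀ * G) *ᵥ (T *ᵥ lt.1)) := by
    rw [← mulVec_mulVec, ← mulVec_mulVec, dotProduct_mulVec, vecMul_transpose]
  -- diag part inequality
  have hdiag : lt.1 ⬝ᵥ (Tᵀ * (Gᵀ * G) * T).diag ≤ (T *ᵥ lt.1) ⬝ᵥ (Gᵀ * G).diag := by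
    have hjj : ∀ j, (Tᵀ * (Gᵀ * G) * T).diag j ≤ ∑ i, T i j * (Gᵀ * G).diag i := by
      intro j
      have hrw : (Tᵀ * (Gᵀ * G) * T).diag j = ∑ k, (∑ i, T i j * G k i) ^ 2 := by
        have : Tᵀ * (Gᵀ * G) * T = (G * T)ᵀ * (G * T) := by
          simp only [transpose_mul, Matrix.mul_assoc]
        rw [this]
        simp only [Matrix.diag, mul_apply, transpose_apply, Matrix.mul_apply]
        refine Finset.sum_congr rfl fun k _ => ?_
        rw [← sq]
        congr 1
        exact Finset.sum_congr rfl fun i _ => mul_comm _ _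
      rw [hrw]
      have hrw2 : ∑ i, T i j * (Gᵀ * G).diag i = ∑ k, ∑ i, T i j * G k i ^ 2 := by
        simp only [Matrix.diag, mul_apply, transpose_apply, Finset.mul_sum, ← sq]
        exact Finset.sum_comm
      rw [hrw2]
      exact Finset.sum_le_sum fun k _ =>
        jensen_sq m (fun i => T i j) (fun i => G k i) ((hT j).1) ((hT j).2)
    have hrhs : (T *ᵥ lt.1) ⬝ᵥ (Gᵀ * G).diag
        = ∑ j, lt.1 j * ∑ i, T i j * (Gᵀ * G).diag i := by
      simp only [dotProduct, mulVec, Finset.sum_mul, Finset.mul_sum]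
      rw [Finset.sum_comm]
      refine Finset.sum_congr rfl fun j _ => Finset.sum_congr rfl fun i _ => by ring
    rw [hrhs]
    exact Finset.sum_le_sum fun j _ =>
      mul_le_mul_of_nonneg_left (hjj j) (lt.2.1 j)
  rw [hlin, hquad]
  have hpos : 0 ≤ 1/(2*L) := by positivity
  exact add_le_add_right (mul_le_mul_of_nonneg_left (sub_le_sub_right hdiag _) hpos) _
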